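/- Let G be a connected graph and let each vertex be assigned a parent pointer by any procedure with the property that whenever a vertex v ≠ r is assigned parent u, the vertex u already has a path of parent pointers reaching the root r. Then the resulting parent-pointer structure is a spanning tree of G rooted at r (i.e., the parent pointers contain no cycle and every vertex reaches r). -/

import Mathlib

/-- Benign race condition in Bader–Cong's parallel spanning tree algorithm:
let `G` be a connected graph, `r` a root, and suppose every vertex `v ≠ r` is
assigned (at time `τ v`) a parent `parent v` adjacent to it such that, at the
moment of assignment, the parent already has a path of parent pointers (all
assigned earlier) reaching `r`. Then the parent pointers contain no cycle,
every vertex reaches `r`, and the resulting parent-pointer structure is a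
spanning tree of `G` rooted at `r`. -/
theorem parent_pointers_spanning_tree {V : Type*} [Fintype V] [DecidableEq V]
    (G : SimpleGraph V) (hG : G.Connected) (r : V)
    (parent : V → V) (τ : V → ℕ)
    (hroot : parent r = r)
    (hadj : ∀ v, v ≠ r → G.Adj (parent v) v)
    (hrace : ∀ v, v ≠ r → ∃ k, parent^[k] (parent v) = r ∧
      ∀ j < k, τ (parent^[j] (parent v)) < τ v) :
    (∀ v, ∃ k, parent^[k] v = r) ∧
    (SimpleGraph.fromEdgeSet {e | ∃ v, v ≠ r ∧ e = s(v, parent v)}).IsTree ∧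
    SimpleGraph.fromEdgeSet {e | ∃ v, v ≠ r ∧ e = s(v, parent v)} ≤ G := by
  classical
  have hreach : ∀ v, ∃ k, parent^[k] v = r := by
    intro v
    by_cases hv : v = r
    · exact ⟨0, hv⟩
    · obtain ⟨k, hk, -⟩ := hrace v hv
      exact ⟨k + 1, by rwa [Function.iterate_succ_apply]⟩
  set S : Set (Sym2 V) := {e | ∃ v, v ≠ r ∧ e = s(v, parent v)} with hS
  set T := SimpleGraph.fromEdgeSet S with hT
  -- depth function
  let d : V → ℕ := fun v => Nat.find (hreach v)
  have hd_spec : ∀ v, parent^[d v] v = r := fun v => Nat.find_spec (hreach v)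
  have hd_parent : ∀ v, v ≠ r → d v = d (parent v) + 1 := by
    intro v hv
    have h1 : d v ≠ 0 := by
      intro h0
      exact hv (by simpa [h0] using hd_spec v)
    obtain ⟨m, hm⟩ := Nat.exists_eq_succ_of_ne_zero h1
    have hle : d (parent v) ≤ m := by
      apply Nat.find_le
      have h2 := hd_spec v
      rwa [hm, Function.iterate_succ_apply] at h2
    have hge : d v ≤ d (parent v) + 1 := by
      apply Nat.find_le
      rw [Function.iterate_succ_apply]
      exact hd_spec (parent v)
    omega
  -- descendants of v ≠ r have depth ≥ d v
  have hdesc_d : ∀ (v : V), v ≠ r → ∀ k x, parent^[k] x = v → d v ≤ d x := by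
    intro v hv k
    induction k with
    | zero => intro x hx; simp only [Function.iterate_zero, id] at hx; subst hx; exact le_rfl
    | succ k ih =>
      intro x hx
      rw [Function.iterate_succ_apply] at hx
      have hxr : x ≠ r := by
        rintro rfl
        rw [hroot, Function.iterate_fixed hroot] at hx
        exact hv hx.symm
      have h1 := ih (parent x) hx
      have h2 := hd_parent x hxr
      omega
  have hpar_not_desc : ∀ v, v ≠ r → ∀ k, parent^[k] (parent v) ≠ v := by
    intro v hv k hk
    have h1 := hdesc_d v hv k (parent v) hk
    have h2 := hd_parent v hv
    omega
  -- membership in descendants of v is invariant along edges ≠ s(v, parent v)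
  have hedge : ∀ v, v ≠ r → ∀ a b, T.Adj a b → s(a, b) ≠ s(v, parent v) →
      ((∃ k, parent^[k] a = v) ↔ (∃ k, parent^[k] b = v)) := by
    intro v hv a b hab hne
    rw [hT, SimpleGraph.fromEdgeSet_adj] at hab
    obtain ⟨⟨w, hw, hwe⟩, -⟩ := hab
    have hne' : w ≠ v := by
      rintro rfl
      exact hne hwe
    have key : (∃ k, parent^[k] w = v) ↔ (∃ k, parent^[k] (parent w) = v) := by
      constructor
      · rintro ⟨k, hk⟩
        cases k with
        | zero => simp only [Function.iterate_zero, id] at hk; exact absurd hk hne'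
        | succ k => exact ⟨k, by rwa [Function.iterate_succ_apply] at hk⟩
      · rintro ⟨k, hk⟩
        exact ⟨k + 1, by rwa [Function.iterate_succ_apply]⟩
    rw [Sym2.eq_iff] at hwe
    rcases hwe with ⟨rfl, rfl⟩ | ⟨rfl, rfl⟩
    · exact key
    · exact key.symm
  -- walk invariance
  have hwalk : ∀ v, v ≠ r → ∀ (a b : V) (p : T.Walk a b), s(v, parent v) ∉ p.edges →
      ((∃ k, parent^[k] a = v) ↔ (∃ k, parent^[k] b = v)) := by
    intro v hv a b p
    induction p with
    | nil => intro _; rfl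
    | cons h q ih =>
      intro hne
      rw [SimpleGraph.Walk.edges_cons, List.mem_cons] at hne
      push_neg at hne
      exact (hedge v hv _ _ h (Ne.symm hne.1)).trans (ih hne.2)
  -- acyclicity
  have hacyc : T.IsAcyclic := by
    rw [SimpleGraph.isAcyclic_iff_forall_adj_isBridge]
    intro a b hab
    rw [SimpleGraph.isBridge_iff_adj_and_forall_walk_mem_edges]
    refine fun p => ?_
    by_contra hne
    have hab' := hab
    rw [hT, SimpleGraph.fromEdgeSet_adj] at hab'
    obtain ⟨⟨w, hw, hwe⟩, -⟩ := hab'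
    have hiff := hwalk w hw a b p (by rwa [hwe] at hne)
    rw [Sym2.eq_iff] at hwe
    rcases hwe with ⟨rfl, rfl⟩ | ⟨rfl, rfl⟩
    · obtain ⟨k, hk⟩ := hiff.mp ⟨0, rfl⟩
      exact hpar_not_desc a hw k hk
    · obtain ⟨k, hk⟩ := hiff.mpr ⟨0, rfl⟩
      exact hpar_not_desc b hw k hk
  -- connectivity
  have hadjT : ∀ x, x ≠ r → T.Adj x (parent x) := by
    intro x hxr
    rw [hT, SimpleGraph.fromEdgeSet_adj]
    exact ⟨⟨x, hxr, rfl⟩, (hadj x hxr).ne'⟩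
  have hreachT : ∀ k x, parent^[k] x = r → T.Reachable x r := by
    intro k
    induction k with
    | zero => intro x hx; exact hx ▸ SimpleGraph.Reachable.refl x
    | succ k ih =>
      intro x hx
      by_cases hxr : x = r
      · exact hxr ▸ SimpleGraph.Reachable.refl x
      · exact (hadjT x hxr).reachable.trans
          (ih (parent x) (by rwa [Function.iterate_succ_apply] at hx))
  have hconn : T.Connected := by
    rw [SimpleGraph.connected_iff]
    refine ⟨fun u v => ?_, hG.nonempty⟩
    obtain ⟨k, hk⟩ := hreach u
    obtain ⟨m, hm⟩ := hreach v
    exact (hreachT k u hk).trans (hreachT m v hm).symm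
  -- subgraph
  have hle : T ≤ G := by
    intro a b hab
    rw [hT, SimpleGraph.fromEdgeSet_adj] at hab
    obtain ⟨⟨w, hw, hwe⟩, -⟩ := hab
    rw [Sym2.eq_iff] at hwe
    rcases hwe with ⟨rfl, rfl⟩ | ⟨rfl, rfl⟩
    · exact (hadj a hw).symm
    · exact hadj b hw
  exact ⟨hreach, ⟨hconn, hacyc⟩, hle⟩
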